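/- Let p be a prime, ω = exp(2πi/p) ∈ ℂ, and f : ℤ/pℤ → ℤ/pℤ a function. Suppose that for every a, b ∈ ℤ/pℤ the average μ_f^{a,b} = (1/p) · ∑_{x ∈ ℤ/pℤ} ω^{a·f(x) + b·x} is an algebraic integer. Then f is a linear polynomial function: there exist α, β ∈ ℤ/pℤ such that f(x) = α·x + β for all x ∈ ℤ/pℤ. -/

import Mathlib

open Polynomial Finset

lemma fiber_counts_congruent (p : ℕ) [Fact p.Prime] (ω : ℂ) (hω' : IsPrimitiveRoot ω p)
    (g : ZMod p → ZMod p)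
    (hint : IsIntegral ℤ ((1 / (p : ℂ)) * ∑ x : ZMod p, ω ^ (g x).val)) :
    ∃ c : ZMod p, ∀ j : ZMod p,
      ((Finset.univ.filter (fun x => g x = j)).card : ZMod p) = c := by
  have hp : p.Prime := Fact.out
  have hppos : 0 < p := hp.pos
  set q : ℕ+ := ⟨p, hppos⟩ with hq
  let K := CyclotomicField q ℚ
  letI : Algebra ℤ K := Ring.toIntAlgebra K
  haveI : NeZero (q : ℕ) := ⟨hp.ne_zero⟩
  haveI : NeZero ((q : ℕ) : ℚ) := ⟨Nat.cast_ne_zero.mpr hp.ne_zero⟩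
  haveI : IsCyclotomicExtension {(q : ℕ)} ℚ K :=
    CyclotomicField.isCyclotomicExtension (q : ℕ) ℚ
  let ζ : K := IsCyclotomicExtension.zeta q ℚ K
  have hζq : IsPrimitiveRoot ζ (q : ℕ) := IsCyclotomicExtension.zeta_spec q ℚ K
  have hζ : IsPrimitiveRoot ζ p := hζq
  let pb : PowerBasis ℚ K := hζq.powerBasis ℚ
  have hpbgen : pb.gen = ζ := IsPrimitiveRoot.powerBasis_gen ℚ hζq
  have hroot : aeval ω (minpoly ℚ pb.gen) = 0 := by
    rw [hpbgen, ← cyclotomic_eq_minpoly_rat hζ hppos, cyclotomic_eq_minpoly_rat hω' hppos]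
    exact minpoly.aeval ℚ ω
  let φ : K →ₐ[ℚ] ℂ := pb.lift ω hroot
  have hφζ : φ ζ = ω := by
    have := pb.lift_gen ω hroot
    rwa [hpbgen] at this
  have hφinj : Function.Injective φ := φ.toRingHom.injective
  set ν : K := (1 / (p : K)) * ∑ x : ZMod p, ζ ^ (g x).val with hν
  have hφν : φ ν = (1 / (p : ℂ)) * ∑ x : ZMod p, ω ^ (g x).val := by
    rw [hν, map_mul, map_sum]
    have hφp : φ (p : K) = (p : ℂ) := map_natCast φ p
    simp [map_div₀, hφζ, hφp]
  have hνint : IsIntegral ℤ ν := by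
    rw [← isIntegral_algHom_iff φ.toRingHom.toIntAlgHom hφinj]
    show IsIntegral ℤ (φ ν)
    rw [hφν]; exact hint
  haveI : Fact (Nat.Prime (q : ℕ)) := ⟨hp⟩
  haveI := IsCyclotomicExtension.Rat.isIntegralClosure_adjoin_singleton_of_prime hζq
  obtain ⟨y, hy⟩ :=
    (IsIntegralClosure.isIntegral_iff (A := (Algebra.adjoin ℤ ({ζ} : Set K)))).mp hνint
  have hy2 : (y : K) ∈ (Polynomial.aeval (R := ℤ) ζ).range := by
    rw [← Algebra.adjoin_singleton_eq_range_aeval]; exact y.2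
  obtain ⟨P, hP⟩ := hy2
  set M : ℤ[X] := ∑ x : ZMod p, (X : ℤ[X]) ^ (g x).val with hM
  have hpK : (p : K) ≠ 0 := Nat.cast_ne_zero.mpr hp.ne_zero
  have hMeval : aeval ζ M = (p : K) * ν := by
    rw [hν, ← mul_assoc, mul_one_div, div_self hpK, one_mul, hM, map_sum]
    simp
  have hvanish : aeval ζ (M - C (p : ℤ) * P) = 0 := by
    have hPy : aeval ζ P = (y : K) := hP
    have hyν : (y : K) = ν := hy
    rw [map_sub, map_mul, hMeval, aeval_C, hPy, hyν]
    have halg : (algebraMap ℤ K) (p : ℤ) = (p : K) := by simp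
    rw [halg]
    ring
  have hdvd : minpoly ℤ ζ ∣ (M - C (p : ℤ) * P) :=
    minpoly.isIntegrallyClosed_dvd (hζ.isIntegral hppos) hvanish
  rw [← cyclotomic_eq_minpoly hζ hppos] at hdvd
  obtain ⟨Q, hQ⟩ := hdvd
  -- now map everything to (ZMod p)[X]
  have hmap : M.map (Int.castRingHom (ZMod p)) =
      cyclotomic p (ZMod p) * Q.map (Int.castRingHom (ZMod p)) := by
    have h2 := congrArg (Polynomial.map (Int.castRingHom (ZMod p))) hQ
    rw [Polynomial.map_sub, Polynomial.map_mul, Polynomial.map_mul, map_cyclotomic,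
      Polynomial.map_C] at h2
    have hC : (C ((Int.castRingHom (ZMod p)) (p : ℤ)) : (ZMod p)[X]) = 0 := by
      simp [ZMod.natCast_self]
    rw [hC, zero_mul, sub_zero] at h2
    exact h2
  set Mbar := M.map (Int.castRingHom (ZMod p)) with hMbar
  set Qbar := Q.map (Int.castRingHom (ZMod p)) with hQbar
  -- degree bound
  have hdegM : M.natDegree ≤ p - 1 := by
    apply Polynomial.natDegree_sum_le_of_forall_le
    intro x _
    rw [natDegree_X_pow]
    exact Nat.le_sub_one_of_lt ((g x).val_lt)
  have hdegMbar : Mbar.natDegree ≤ p - 1 :=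
    le_trans Polynomial.natDegree_map_le hdegM
  have hcyc_deg : (cyclotomic p (ZMod p)).natDegree = p - 1 := by
    rw [natDegree_cyclotomic, Nat.totient_prime hp]
  have hcyc_ne : (cyclotomic p (ZMod p)) ≠ 0 := cyclotomic_ne_zero p (ZMod p)
  have hQdeg : Qbar.natDegree = 0 := by
    by_cases hQ0 : Qbar = 0
    · rw [hQ0]; simp
    · have := Polynomial.natDegree_mul hcyc_ne hQ0
      rw [← hmap] at this
      omega
  have hQc : Qbar = C (Qbar.coeff 0) := (Polynomial.eq_C_of_natDegree_eq_zero hQdeg)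
  refine ⟨Qbar.coeff 0, fun j => ?_⟩
  -- compute coefficient of Mbar at j.val two ways
  have hcoeffM : M.coeff j.val = ((Finset.univ.filter (fun x => g x = j)).card : ℤ) := by
    rw [hM, Polynomial.finset_sum_coeff]
    have : ∀ x : ZMod p, ((X : ℤ[X]) ^ (g x).val).coeff j.val =
        if g x = j then 1 else 0 := by
      intro x
      rw [Polynomial.coeff_X_pow]
      congr 1
      simp only [eq_iff_iff]
      constructor
      · intro hvv
        have := ZMod.val_injective p (hvv.symm : (g x).val = j.val)
        exact this
      · intro hgj; rw [hgj]
    rw [Finset.sum_congr rfl (fun x _ => this x)]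
    simp [Finset.sum_boole]
  have hlhs : Mbar.coeff j.val = ((Finset.univ.filter (fun x => g x = j)).card : ZMod p) := by
    rw [hMbar, Polynomial.coeff_map, hcoeffM]
    simp
  have hrhs : Mbar.coeff j.val = Qbar.coeff 0 := by
    conv_lhs => rw [hmap, hQc, cyclotomic_prime, Finset.sum_mul]
    rw [Polynomial.finset_sum_coeff]
    have hterm : ∀ i ∈ Finset.range p, ((X : (ZMod p)[X]) ^ i * C (Qbar.coeff 0)).coeff j.val =
        if i = j.val then Qbar.coeff 0 else 0 := by
      intro i _
      rw [mul_comm, Polynomial.coeff_C_mul, Polynomial.coeff_X_pow]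
      by_cases hij : j.val = i
      · rw [if_pos hij, if_pos hij.symm, mul_one]
      · rw [if_neg hij, if_neg fun hc => hij hc.symm, mul_zero]
    rw [Finset.sum_congr rfl hterm,
      Finset.sum_ite_eq' (Finset.range p) j.val (fun _ => Qbar.coeff 0),
      if_pos (Finset.mem_range.mpr (ZMod.val_lt j))]
  rw [← hlhs, hrhs]

theorem linear_of_average_isIntegral_all_a_b
    (p : ℕ) [Fact p.Prime] (ω : ℂ) (hω : ω = Complex.exp (2 * Real.pi * Complex.I / p))
    (f : ZMod p → ZMod p)
    (h : ∀ a b : ZMod p,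
      IsIntegral ℤ ((1 / (p : ℂ)) * ∑ x : ZMod p, ω ^ (a * f x + b * x).val)) :
    ∃ α β : ZMod p, ∀ x : ZMod p, f x = α * x + β := by
  have hp : p.Prime := Fact.out
  have hppos : 0 < p := hp.pos
  haveI : NeZero p := ⟨hp.ne_zero⟩
  have hω' : IsPrimitiveRoot ω p := hω ▸ Complex.isPrimitiveRoot_exp p hp.ne_zero
  set b : ZMod p := f 0 - f 1 with hbdef
  set g : ZMod p → ZMod p := fun x => f x + b * x with hg
  have hint : IsIntegral ℤ ((1 / (p : ℂ)) * ∑ x : ZMod p, ω ^ (g x).val) := by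
    have := h 1 b
    simpa [hg, one_mul] using this
  obtain ⟨c, hc⟩ := fiber_counts_congruent p ω hω' g hint
  set n : ZMod p → ℕ := fun j => (Finset.univ.filter (fun x => g x = j)).card with hn
  have hsum : ∑ j : ZMod p, n j = p := by
    have hfib := Finset.card_eq_sum_card_fiberwise (f := g) (s := Finset.univ)
      (t := Finset.univ) (fun x _ => Finset.mem_univ (g x))
    rw [Finset.card_univ, ZMod.card] at hfib
    exact hfib.symm
  -- 0 and 1 are in the fiber over f 0
  have h01 : (0 : ZMod p) ≠ 1 := zero_ne_one
  have hg0 : g 0 = f 0 := by simp [hg]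
  have hg1 : g 1 = f 0 := by rw [hg]; simp [hbdef]
  have hnf0 : 2 ≤ n (f 0) := by
    have hsub : ({0, 1} : Finset (ZMod p)) ⊆ Finset.univ.filter (fun x => g x = f 0) := by
      intro x hx
      rcases Finset.mem_insert.mp hx with rfl | hx
      · exact Finset.mem_filter.mpr ⟨Finset.mem_univ _, hg0⟩
      · rw [Finset.mem_singleton] at hx; subst hx
        exact Finset.mem_filter.mpr ⟨Finset.mem_univ _, hg1⟩
    have hcard : ({0, 1} : Finset (ZMod p)).card = 2 := by
      rw [Finset.card_insert_of_notMem (by simpa using h01), Finset.card_singleton]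
    calc 2 = ({0, 1} : Finset (ZMod p)).card := hcard.symm
      _ ≤ _ := Finset.card_le_card hsub
  -- all fibers map to f 0
  have hconst : ∀ x : ZMod p, g x = f 0 := by
    by_contra hcon
    push_neg at hcon
    obtain ⟨x0, hx0⟩ := hcon
    have hnx0 : 1 ≤ n (g x0) := by
      rw [hn]
      exact Finset.card_pos.mpr ⟨x0, Finset.mem_filter.mpr ⟨Finset.mem_univ _, rfl⟩⟩
    -- c ≠ 0
    have hcne : c ≠ 0 := by
      intro hc0
      -- then p ∣ n (g x0), but 1 ≤ n (g x0) ≤ p - 2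
      have hdvd : p ∣ n (g x0) := by
        have := hc (g x0)
        rw [hc0] at this
        exact (ZMod.natCast_eq_zero_iff _ _).mp this
      have hle : n (g x0) + n (f 0) ≤ p := by
        have hdisj : Disjoint (Finset.univ.filter (fun x => g x = g x0))
            (Finset.univ.filter (fun x => g x = f 0)) := by
          apply Finset.disjoint_filter.mpr
          intro x _ h1 h2
          exact hx0 (h1.symm.trans h2)
        calc n (g x0) + n (f 0)
            = ((Finset.univ.filter (fun x => g x = g x0)) ∪
               (Finset.univ.filter (fun x => g x = f 0))).card :=
              (Finset.card_union_of_disjoint hdisj).symm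
          _ ≤ (Finset.univ : Finset (ZMod p)).card := Finset.card_le_card (Finset.subset_univ _)
          _ = p := Finset.card_univ.trans (ZMod.card p)
      have := Nat.le_of_dvd (by omega) hdvd
      omega
    -- every fiber is nonempty
    have hall : ∀ j : ZMod p, 1 ≤ n j := by
      intro j
      rcases Nat.eq_zero_or_pos (n j) with h0 | h1
      · exfalso
        apply hcne
        rw [← hc j]
        have h0' : (Finset.univ.filter (fun x => g x = j)).card = 0 := h0
        rw [h0', Nat.cast_zero]
      · exact h1
    -- contradiction with total count
    have : p + 1 ≤ ∑ j : ZMod p, n j := by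
      rw [← Finset.add_sum_erase _ n (Finset.mem_univ (f 0))]
      have h2 : ∑ j ∈ Finset.univ.erase (f 0), 1 ≤ ∑ j ∈ Finset.univ.erase (f 0), n j :=
        Finset.sum_le_sum (fun j _ => hall j)
      rw [Finset.sum_const, smul_eq_mul, mul_one] at h2
      have hcard : (Finset.univ.erase (f 0)).card = p - 1 := by
        rw [Finset.card_erase_of_mem (Finset.mem_univ _), Finset.card_univ, ZMod.card]
      rw [hcard] at h2
      omega
    omega
  -- conclude linearity
  refine ⟨f 1 - f 0, f 0, fun x => ?_⟩
  have := hconst x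
  rw [hg] at this
  have : f x = f 0 - b * x := by
    rw [← this]; ring
  rw [this, hbdef]
  ring
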